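/- Let δ, ε ∈ ℝ satisfy 0 < 2ε < δ < π and ((1 − cos δ)/min{sin δ, sin(δ − 2ε)})·sin ε < 2. Then the equation cos(δ − η) − cos δ = (1 − cos δ)·sin²ε has a unique solution η in the interval [0, 2ε), and this solution satisfies η ≤ (1 − cos δ)·sin²ε / min{sin δ, sin(δ − 2ε)}. -/

import Mathlib

noncomputable section

open Real Set

lemma sin_ge_min_aux {a b x : ℝ} (ha : 0 ≤ a) (hb : b ≤ π) (hab : a ≤ b)
    (hx : x ∈ Set.Icc a b) :
    min (Real.sin a) (Real.sin b) ≤ Real.sin x :=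
  strictConcaveOn_sin_Icc.concaveOn.min_le_of_mem_Icc
    ⟨ha, le_trans hab hb⟩ ⟨le_trans ha hab, hb⟩ hx

/-- the equation `cos(δ - η) - cos δ = (1 - cos δ)·sin²ε` has a unique solution
`η ∈ [0, 2ε)`, and this solution is at most `(1 - cos δ)·sin²ε / min(sin δ, sin(δ - 2ε))`. -/
theorem statement13 (δ ε : ℝ) (hε : 0 < ε) (h2 : 2 * ε < δ) (hδ : δ < Real.pi)
    (hsmall : (1 - Real.cos δ) / min (Real.sin δ) (Real.sin (δ - 2 * ε)) * Real.sin ε < 2) :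
    ∃ η : ℝ, η ∈ Set.Ico (0 : ℝ) (2 * ε) ∧
      Real.cos (δ - η) - Real.cos δ = (1 - Real.cos δ) * Real.sin ε ^ 2 ∧
      η ≤ (1 - Real.cos δ) * Real.sin ε ^ 2 / min (Real.sin δ) (Real.sin (δ - 2 * ε)) ∧
      ∀ η' : ℝ, η' ∈ Set.Ico (0 : ℝ) (2 * ε) →
        Real.cos (δ - η') - Real.cos δ = (1 - Real.cos δ) * Real.sin ε ^ 2 → η' = η := by
  have hεπ : ε < π := by linarith
  have h2ε : 0 < 2 * ε := by linarith
  have hδ0 : 0 < δ := by linarith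
  set m : ℝ := min (Real.sin δ) (Real.sin (δ - 2 * ε)) with hm
  have hsδ : 0 < Real.sin δ := Real.sin_pos_of_pos_of_lt_pi hδ0 hδ
  have hsδ2 : 0 < Real.sin (δ - 2 * ε) := Real.sin_pos_of_pos_of_lt_pi (by linarith) (by linarith)
  have hm0 : 0 < m := lt_min hsδ hsδ2
  have hsε : 0 < Real.sin ε := Real.sin_pos_of_pos_of_lt_pi hε hεπ
  have hcδ : Real.cos δ < 1 := by
    have := Real.cos_lt_cos_of_nonneg_of_le_pi (le_refl 0) (le_of_lt hδ) hδ0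
    simpa using this
  -- m is a lower bound for sin on [δ - 2ε, δ]
  have hmin : ∀ x ∈ Set.Icc (δ - 2 * ε) δ, m ≤ Real.sin x := by
    intro x hx
    have := sin_ge_min_aux (a := δ - 2 * ε) (b := δ) (by linarith) (le_of_lt hδ)
      (by linarith) hx
    rw [min_comm] at this
    exact this
  set c : ℝ := (1 - Real.cos δ) * Real.sin ε ^ 2 with hc
  have hc0 : 0 ≤ c := mul_nonneg (by linarith) (sq_nonneg _)
  -- key smallness: c < cos (δ - 2ε) - cos δ
  have hid : Real.cos (δ - 2 * ε) - Real.cos δ = 2 * Real.sin (δ - ε) * Real.sin ε := by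
    rw [Real.cos_sub_cos, show (δ - 2 * ε + δ) / 2 = δ - ε by ring,
      show (δ - 2 * ε - δ) / 2 = -ε by ring, Real.sin_neg]
    ring
  have hkey : c < Real.cos (δ - 2 * ε) - Real.cos δ := by
    have h1 : (1 - Real.cos δ) * Real.sin ε < 2 * m := by
      have h := hsmall
      rw [div_mul_eq_mul_div, div_lt_iff₀ hm0] at h
      linarith
    have h2' : m ≤ Real.sin (δ - ε) := hmin _ ⟨by linarith, by linarith⟩
    have : (1 - Real.cos δ) * Real.sin ε * Real.sin ε < 2 * Real.sin (δ - ε) * Real.sin ε := by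
      have : (1 - Real.cos δ) * Real.sin ε < 2 * Real.sin (δ - ε) := by linarith
      nlinarith
    rw [hid]
    calc c = (1 - Real.cos δ) * Real.sin ε * Real.sin ε := by rw [hc]; ring
    _ < 2 * Real.sin (δ - ε) * Real.sin ε := this
  set y : ℝ := Real.cos δ + c with hy
  have hy1 : y ≤ 1 := by
    have : Real.cos (δ - 2 * ε) ≤ 1 := Real.cos_le_one _
    linarith
  have hym1 : -1 ≤ y := by
    have : -1 ≤ Real.cos δ := Real.neg_one_le_cos δ
    linarith
  set η : ℝ := δ - Real.arccos y with hη
  have harc_mem : Real.arccos y ∈ Set.Icc (0:ℝ) π := ⟨Real.arccos_nonneg y, Real.arccos_le_pi y⟩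
  have hcosarc : Real.cos (Real.arccos y) = y := Real.cos_arccos hym1 hy1
  have harc_le : Real.arccos y ≤ δ := by
    by_contra h
    push_neg at h
    have h1 : Real.cos (Real.arccos y) < Real.cos δ :=
      Real.cos_lt_cos_of_nonneg_of_le_pi (le_of_lt hδ0) (Real.arccos_le_pi y) h
    rw [hcosarc] at h1
    have : Real.cos δ ≤ y := by rw [hy]; linarith
    linarith
  have harc_gt : δ - 2 * ε < Real.arccos y := by
    by_contra h
    push_neg at h
    have h1 : Real.cos (δ - 2 * ε) ≤ Real.cos (Real.arccos y) := by
      apply Real.cos_le_cos_of_nonneg_of_le_pi (Real.arccos_nonneg y) (by linarith) h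
    rw [hcosarc] at h1
    have : y < Real.cos (δ - 2 * ε) := by rw [hy]; linarith
    linarith
  have hηmem : η ∈ Set.Ico (0:ℝ) (2 * ε) := ⟨by rw [hη]; linarith, by rw [hη]; linarith⟩
  have hηeq : Real.cos (δ - η) - Real.cos δ = c := by
    have h1 : δ - η = Real.arccos y := by rw [hη]; ring
    rw [h1, hcosarc, hy]
    ring
  refine ⟨η, hηmem, hηeq, ?_, ?_⟩
  · -- bound via monotonicity of g t = cos (δ - t) - m * t
    have hg : ∀ t : ℝ, HasDerivAt (fun t => Real.cos (δ - t) - m * t) (Real.sin (δ - t) - m) t := by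
      intro t
      have h1 : HasDerivAt (fun x : ℝ => δ - x) (-1) t := (hasDerivAt_id t).const_sub δ
      have h2 : HasDerivAt (fun x : ℝ => Real.cos (δ - x)) (-Real.sin (δ - t) * (-1)) t :=
        (Real.hasDerivAt_cos (δ - t)).comp t h1
      have h3 : HasDerivAt (fun x : ℝ => m * x) m t := by
        simpa using (hasDerivAt_id t).const_mul m
      exact (h2.sub h3).congr_deriv (by ring)
    have hmono : MonotoneOn (fun t => Real.cos (δ - t) - m * t) (Set.Icc 0 (2 * ε)) := by
      apply monotoneOn_of_deriv_nonneg (convex_Icc _ _)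
      · exact ((Real.continuous_cos.comp (continuous_const.sub continuous_id)).sub
          (continuous_const.mul continuous_id)).continuousOn
      · intro t ht
        exact (hg t).differentiableAt.differentiableWithinAt
      · intro t ht
        rw [interior_Icc] at ht
        rw [(hg t).deriv]
        have : m ≤ Real.sin (δ - t) := hmin _ ⟨by linarith [ht.2], by linarith [ht.1]⟩
        linarith
    have h0 : (fun t => Real.cos (δ - t) - m * t) 0 ≤ (fun t => Real.cos (δ - t) - m * t) η :=
      hmono ⟨le_refl 0, le_of_lt h2ε⟩ ⟨hηmem.1, le_of_lt hηmem.2⟩ hηmem.1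
    simp only [mul_zero, sub_zero] at h0
    have : m * η ≤ c := by linarith [hηeq]
    rw [le_div_iff₀ hm0]
    linarith [mul_comm m η]
  · -- uniqueness
    intro η' hη' heq'
    have h1 : Real.cos (δ - η') = Real.cos (δ - η) := by rw [hηeq.symm] at heq'; linarith
    have hmem1 : δ - η' ∈ Set.Icc (0:ℝ) π := ⟨by linarith [hη'.2], by linarith [hη'.1]⟩
    have hmem2 : δ - η ∈ Set.Icc (0:ℝ) π := ⟨by linarith [hηmem.2], by linarith [hηmem.1]⟩
    have := Real.injOn_cos hmem1 hmem2 h1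
    linarith
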